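/- Let k be an infinite field, n a positive integer, x, y, u, v homogeneous polynomials of degree 1 and f, g, p, q homogeneous polynomials of degree 2 in k[x_1,…,x_n], and set h = x²f + y²g + u²p + v²q. Identify the vector space of degree-4 forms in k[x_1,…,x_n] with k^N via coefficients in the monomial basis. Then every polynomial function P on k^N that vanishes at (the coefficient vector of) every degree-4 form of strength at most 3 also vanishes at h. In other words, h lies in the Zariski closure of the set of degree-4 forms of strength at most 3. -/

import Mathlib

/-- `F` admits a strength decomposition of length `r` in the standard-graded polynomial
ring `k[x_1,…,x_n]`: an expression `F = ∑ i, g i * h i` where each `g i`, `h i` is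
homogeneous of some degree between `1` and `d - 1`. -/
def HasStrengthDecompOfLength {n : ℕ} {k : Type*} [CommRing k]
    (d r : ℕ) (F : MvPolynomial (Fin n) k) : Prop :=
  ∃ (g h : Fin r → MvPolynomial (Fin n) k) (a b : Fin r → ℕ),
    (∀ i, 1 ≤ a i ∧ a i ≤ d - 1 ∧ (g i).IsHomogeneous (a i)) ∧
    (∀ i, 1 ≤ b i ∧ b i ≤ d - 1 ∧ (h i).IsHomogeneous (b i)) ∧
    F = ∑ i, g i * h i

open MvPolynomial in
/-- Over an infinite field, the quartic `h = x²f + y²g + u²p + v²q` lies in the Zariski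
closure of the set of degree-4 forms of strength at most 3: identifying the space of
degree-4 forms with the space of coefficient vectors (indexed by the exponent vectors of
total degree 4), every polynomial function `P` that vanishes at the coefficient vector of
every degree-4 form of strength at most 3 also vanishes at the coefficient vector of `h`. -/
theorem mem_zariski_closure_of_strength_le_three (k : Type*) [Field k] [Infinite k]
    (n : ℕ) (hn : 0 < n)
    (x y u v f g p q : MvPolynomial (Fin n) k)
    (hx : x.IsHomogeneous 1) (hy : y.IsHomogeneous 1)
    (hu : u.IsHomogeneous 1) (hv : v.IsHomogeneous 1)
    (hf : f.IsHomogeneous 2) (hg : g.IsHomogeneous 2)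
    (hp : p.IsHomogeneous 2) (hq : q.IsHomogeneous 2)
    (P : MvPolynomial {d : Fin n →₀ ℕ // (d.sum fun _ e => e) = 4} k)
    (hP : ∀ F : MvPolynomial (Fin n) k, F.IsHomogeneous 4 →
      HasStrengthDecompOfLength 4 3 F →
      MvPolynomial.eval (fun d => F.coeff d.1) P = 0) :
    MvPolynomial.eval
      (fun d => (x ^ 2 * f + y ^ 2 * g + u ^ 2 * p + v ^ 2 * q).coeff d.1) P = 0 := by
  set F4 := x ^ 2 * f + y ^ 2 * g + u ^ 2 * p + v ^ 2 * q with hF4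
  set E := p * f - q * g with hE
  have hx2 : (x ^ 2).IsHomogeneous 2 := by simpa using hx.pow 2
  have hy2 : (y ^ 2).IsHomogeneous 2 := by simpa using hy.pow 2
  have hu2 : (u ^ 2).IsHomogeneous 2 := by simpa using hu.pow 2
  have hv2 : (v ^ 2).IsHomogeneous 2 := by simpa using hv.pow 2
  have hE4 : E.IsHomogeneous 4 := by
    have := (hp.mul hf).sub (hq.mul hg)
    simpa [hE] using this
  have hF44 : F4.IsHomogeneous 4 := by
    have h1 : (x ^ 2 * f).IsHomogeneous 4 := by simpa using hx2.mul hf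
    have h2 : (y ^ 2 * g).IsHomogeneous 4 := by simpa using hy2.mul hg
    have h3 : (u ^ 2 * p).IsHomogeneous 4 := by simpa using hu2.mul hp
    have h4 : (v ^ 2 * q).IsHomogeneous 4 := by simpa using hv2.mul hq
    exact ((h1.add h2).add h3).add h4
  have hdecomp : ∀ t : k, t ≠ 0 →
      MvPolynomial.eval (fun d => (F4 + MvPolynomial.C t * E).coeff d.1) P = 0 := by
    intro t ht
    apply hP
    · have : (MvPolynomial.C t * E).IsHomogeneous 4 := by
        simpa using (isHomogeneous_C (Fin n) t).mul hE4
      exact hF44.add this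
    · refine ⟨![x ^ 2 + MvPolynomial.C t * p, y ^ 2 - MvPolynomial.C t * q,
          -(MvPolynomial.C t⁻¹) * (x * u - y * v)],
        ![f + MvPolynomial.C t⁻¹ * u ^ 2, g - MvPolynomial.C t⁻¹ * v ^ 2, x * u + y * v],
        fun _ => 2, fun _ => 2, ?_, ?_, ?_⟩
      · intro i
        refine ⟨by norm_num, by norm_num, ?_⟩
        fin_cases i
        · exact hx2.add (by simpa using (isHomogeneous_C (Fin n) t).mul hp)
        · exact hy2.sub (by simpa using (isHomogeneous_C (Fin n) t).mul hq)
        · have : ((x * u - y * v)).IsHomogeneous 2 := by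
            simpa using (hx.mul hu).sub (hy.mul hv)
          simpa using ((isHomogeneous_C (Fin n) (t⁻¹)).mul this).neg
      · intro i
        refine ⟨by norm_num, by norm_num, ?_⟩
        fin_cases i
        · exact hf.add (by simpa using (isHomogeneous_C (Fin n) t⁻¹).mul hu2)
        · exact hg.sub (by simpa using (isHomogeneous_C (Fin n) t⁻¹).mul hv2)
        · simpa using (hx.mul hu).add (hy.mul hv)
      · have hts : MvPolynomial.C t * MvPolynomial.C t⁻¹ = (1 : MvPolynomial (Fin n) k) := by
          rw [← C_mul, mul_inv_cancel₀ ht, C_1]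
        rw [Fin.sum_univ_three]
        simp only [Matrix.cons_val_zero, Matrix.cons_val_one, Matrix.head_cons,
          Matrix.cons_val_two, Matrix.tail_cons]
        rw [hF4, hE]
        linear_combination -(p * u ^ 2 + q * v ^ 2) * hts
  -- univariate polynomial argument
  set ψ : Polynomial k := MvPolynomial.aeval
    (fun d : {d : Fin n →₀ ℕ // (d.sum fun _ e => e) = 4} =>
      Polynomial.C (F4.coeff d.1) + Polynomial.X * Polynomial.C (E.coeff d.1)) P with hψ
  have hev : ∀ t : k, ψ.eval t =
      MvPolynomial.eval (fun d => (F4 + MvPolynomial.C t * E).coeff d.1) P := by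
    intro t
    have h1 : ψ.eval t = (Polynomial.evalRingHom t) ψ := rfl
    rw [h1, hψ, MvPolynomial.aeval_def, MvPolynomial.eval₂_comp_left (Polynomial.evalRingHom t)]
    have h2 : (Polynomial.evalRingHom t).comp (algebraMap k (Polynomial k)) = RingHom.id k := by
      ext a; simp
    rw [h2]
    have h3 : ((Polynomial.evalRingHom t) ∘ fun d : {d : Fin n →₀ ℕ // (d.sum fun _ e => e) = 4} =>
        Polynomial.C (F4.coeff d.1) + Polynomial.X * Polynomial.C (E.coeff d.1)) =
        fun d => (F4 + MvPolynomial.C t * E).coeff d.1 := by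
      funext d
      simp [coeff_C_mul, mul_comm t]
    rw [h3, MvPolynomial.eval₂_id]
  have hψ0 : ψ = 0 := by
    apply Polynomial.eq_zero_of_infinite_isRoot
    apply Set.Infinite.mono (s := {t : k | t ≠ 0})
    · intro t ht
      have := hdecomp t ht
      simp only [Set.mem_setOf_eq, Polynomial.IsRoot]
      rw [hev t]; exact this
    · exact (Set.finite_singleton (0 : k)).infinite_compl
  have h0 := hev 0
  rw [hψ0, Polynomial.eval_zero] at h0
  have : (fun d : {d : Fin n →₀ ℕ // (d.sum fun _ e => e) = 4} =>
      (F4 + MvPolynomial.C (0 : k) * E).coeff d.1) = fun d => F4.coeff d.1 := by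
    funext d; simp
  rw [this] at h0
  exact h0.symm
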